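/- For all natural numbers x₁ ≥ 1 and x₂, …, xₙ: N(x₁, x₂, …, xₙ) = x₁ if and only if x₂ ⊕ x₃ ⊕ ⋯ ⊕ xₙ = 0 (bitwise XOR) and 2^(⌊log₂ x₁⌋ + 1) divides each of x₂, x₃, …, xₙ. -/

import Mathlib

lemma sum_update_lt {n : ℕ} (x : Fin n → ℕ) (i : Fin n) (v : ℕ) (h : v < x i) :
    (∑ j, Function.update x i v j) < ∑ j, x j := by
  apply Finset.sum_lt_sum
  · intro j _
    rcases eq_or_ne j i with rfl | hj
    · simpa using h.le
    · simp [Function.update_of_ne hj]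
  · exact ⟨i, Finset.mem_univ i, by simpa using h⟩

/-- Sprague–Grundy value of the Auxiliary Nim game
`(*a) ⊞ ((*x 0) ⊕ ⋯ ⊕ (*x (n-1)))`, where `x : Fin n → ℕ` lists the piles
`x₂, …, xₙ` and `a` is the auxiliary pile `x₁`.  It is the mex of the
Sprague–Grundy values of the one-move successors: strictly decrease `a`,
or strictly decrease exactly one of the piles `x i`, or do both. -/
noncomputable def NAux {n : ℕ} (a : ℕ) (x : Fin n → ℕ) : ℕ :=
  sInf {m : ℕ |
    (∀ a', a' < a → NAux a' x ≠ m) ∧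
    (∀ (i : Fin n) (v : ℕ), v < x i → NAux a (Function.update x i v) ≠ m) ∧
    (∀ a', a' < a → ∀ (i : Fin n) (v : ℕ), v < x i →
      NAux a' (Function.update x i v) ≠ m)}
termination_by a + ∑ j, x j
decreasing_by
  · exact Nat.add_lt_add_right ‹_› _
  · exact Nat.add_lt_add_left (sum_update_lt x i v ‹_›) a
  · exact Nat.add_lt_add ‹_› (sum_update_lt x i v ‹_›)

/-- The bitwise XOR `x 0 ^^^ x 1 ^^^ ⋯ ^^^ x (n-1)` of the piles. -/
def xorSum {n : ℕ} (x : Fin n → ℕ) : ℕ := (List.ofFn x).foldr (· ^^^ ·) 0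

/-! ### xor algebra helpers -/

lemma nxor_left_comm (a b c : ℕ) : a ^^^ (b ^^^ c) = b ^^^ (a ^^^ c) := by
  rw [← Nat.xor_assoc, Nat.xor_comm a b, Nat.xor_assoc]

/-! ### Auxiliary set of "non-option values" -/

def SOpt {n : ℕ} (a : ℕ) (x : Fin n → ℕ) : Set ℕ :=
  {m : ℕ |
    (∀ a', a' < a → NAux a' x ≠ m) ∧
    (∀ (i : Fin n) (v : ℕ), v < x i → NAux a (Function.update x i v) ≠ m) ∧
    (∀ a', a' < a → ∀ (i : Fin n) (v : ℕ), v < x i →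
      NAux a' (Function.update x i v) ≠ m)}

lemma NAux_eq {n : ℕ} (a : ℕ) (x : Fin n → ℕ) : NAux a x = sInf (SOpt a x) := by
  rw [NAux]; rfl

lemma SOpt_nonempty {n : ℕ} (a : ℕ) (x : Fin n → ℕ) : (SOpt a x).Nonempty := by
  classical
  set F : Set ℕ :=
    ((fun a' => NAux a' x) '' Set.Iio a) ∪
      ⋃ i : Fin n,
        ((fun p : ℕ × ℕ => NAux p.1 (Function.update x i p.2)) '' (Set.Iic a ×ˢ Set.Iio (x i)))
    with hF
  have hFin : F.Finite := by
    apply Set.Finite.union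
    · exact (Set.finite_Iio a).image _
    · exact Set.finite_iUnion fun i => (((Set.finite_Iic a).prod (Set.finite_Iio (x i))).image _)
  obtain ⟨m, hm⟩ := hFin.infinite_compl.nonempty
  refine ⟨m, ?_, ?_, ?_⟩
  · intro a' ha' h
    exact hm (Or.inl ⟨a', ha', h⟩)
  · intro i v hv h
    exact hm (Or.inr (Set.mem_iUnion.2 ⟨i, ⟨(a, v), ⟨le_refl a, hv⟩, h⟩⟩))
  · intro a' ha' i v hv h
    exact hm (Or.inr (Set.mem_iUnion.2 ⟨i, ⟨(a', v), ⟨ha'.le, hv⟩, h⟩⟩))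

lemma NAux_mem_SOpt {n : ℕ} (a : ℕ) (x : Fin n → ℕ) : NAux a x ∈ SOpt a x := by
  rw [NAux_eq]; exact Nat.sInf_mem (SOpt_nonempty a x)

lemma NAux_ne_of_lt {n : ℕ} {a a' : ℕ} (x : Fin n → ℕ) (h : a' < a) :
    NAux a' x ≠ NAux a x :=
  (NAux_mem_SOpt a x).1 a' h

lemma NAux_ne_pile {n : ℕ} {a : ℕ} {x : Fin n → ℕ} {i : Fin n} {v : ℕ} (hv : v < x i) :
    NAux a (Function.update x i v) ≠ NAux a x :=
  (NAux_mem_SOpt a x).2.1 i v hv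

lemma NAux_ne_both {n : ℕ} {a a' : ℕ} {x : Fin n → ℕ} {i : Fin n} {v : ℕ}
    (h : a' < a) (hv : v < x i) :
    NAux a' (Function.update x i v) ≠ NAux a x :=
  (NAux_mem_SOpt a x).2.2 a' h i v hv

lemma not_mem_SOpt_of_lt {n : ℕ} {a c : ℕ} {x : Fin n → ℕ} (h : c < NAux a x) :
    c ∉ SOpt a x := by
  rw [NAux_eq] at h; exact Nat.notMem_of_lt_sInf h

/-! ### xorSum facts -/

lemma foldr_xor_set (l : List ℕ) (i : ℕ) (v : ℕ) (h : i < l.length) :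
    (l.set i v).foldr (· ^^^ ·) 0 = (l.foldr (· ^^^ ·) 0) ^^^ l[i] ^^^ v := by
  induction l generalizing i with
  | nil => simp at h
  | cons head tail ih =>
    cases i with
    | zero =>
      simp only [List.set_cons_zero, List.foldr_cons, List.getElem_cons_zero]
      simp [Nat.xor_assoc, Nat.xor_comm, nxor_left_comm, Nat.xor_self, Nat.xor_zero,
        Nat.zero_xor, xor_cancel_left]
    | succ j =>
      simp only [List.set_cons_succ, List.foldr_cons, List.getElem_cons_succ]
      rw [ih j (by simpa using h)]
      simp [Nat.xor_assoc, Nat.xor_comm, nxor_left_comm, Nat.xor_self, Nat.xor_zero,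
        Nat.zero_xor, xor_cancel_left]

lemma ofFn_update {n : ℕ} (x : Fin n → ℕ) (i : Fin n) (v : ℕ) :
    List.ofFn (Function.update x i v) = (List.ofFn x).set i v := by
  classical
  apply List.ext_getElem
  · simp
  · intro j h1 h2
    simp only [List.getElem_ofFn, List.getElem_set]
    have h1' : j < n := by simpa using h1
    by_cases hji : (i : ℕ) = j
    · subst hji
      simp [Function.update]
    · rw [if_neg hji]
      have hne : (⟨j, h1'⟩ : Fin n) ≠ i := by
        intro hc; apply hji; rw [← hc]
      simp [Function.update_of_ne hne]

lemma xorSum_update {n : ℕ} (x : Fin n → ℕ) (i : Fin n) (v : ℕ) :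
    xorSum (Function.update x i v) = xorSum x ^^^ x i ^^^ v := by
  unfold xorSum
  rw [ofFn_update, foldr_xor_set _ _ _ (by simpa using i.isLt)]
  congr 2
  simp

lemma exists_testBit_of_xorSum {n : ℕ} (x : Fin n → ℕ) (k : ℕ)
    (h : (xorSum x).testBit k = true) : ∃ i, (x i).testBit k = true := by
  unfold xorSum at h
  have key : ∀ l : List ℕ, (l.foldr (· ^^^ ·) 0).testBit k = true →
      ∃ y ∈ l, y.testBit k = true := by
    intro l
    induction l with
    | nil => simp
    | cons a t ih =>
      intro hl
      rw [List.foldr_cons, Nat.testBit_xor] at hl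
      cases ha : a.testBit k with
      | true => exact ⟨a, by simp, ha⟩
      | false =>
        rw [ha, Bool.false_xor] at hl
        obtain ⟨y, hy, hy2⟩ := ih hl
        exact ⟨y, by simp [hy], hy2⟩
  obtain ⟨y, hy, hy2⟩ := key _ h
  obtain ⟨i, rfl⟩ := Set.mem_range.1 ((List.mem_ofFn' x y).1 hy)
  exact ⟨i, hy2⟩

/-- Nim reachability: any value below the xor is reachable by one pile move. -/
lemma nim_move {n : ℕ} (x : Fin n → ℕ) (c : ℕ) (h : c < xorSum x) :
    ∃ (i : Fin n) (v : ℕ), v < x i ∧ xorSum (Function.update x i v) = c := by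
  set s := xorSum x with hs
  have hd : c ^^^ s ≠ 0 := fun hc => absurd (xor_eq_zero_iff.1 hc) h.ne
  obtain ⟨k, hk, hhigh⟩ := Nat.exists_most_significant_bit hd
  have hsk : s.testBit k = true := by
    by_contra hsk
    simp only [Bool.not_eq_true] at hsk
    have hck : c.testBit k = true := by
      have h2 := (Nat.testBit_xor c s k).symm
      rw [hk, hsk, Bool.xor_false] at h2
      exact h2
    have hlt : s < c := by
      refine Nat.lt_of_testBit k hsk hck ?_
      intro j hj
      have hdj := hhigh j hj
      have h3 := (Nat.testBit_xor c s j).symm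
      rw [hdj] at h3
      cases hcb : c.testBit j <;> cases hsb : s.testBit j <;> simp_all
    omega
  obtain ⟨i, hi⟩ := exists_testBit_of_xorSum x k hsk
  refine ⟨i, x i ^^^ (c ^^^ s), ?_, ?_⟩
  · refine Nat.lt_of_testBit k ?_ hi ?_
    · rw [Nat.testBit_xor, hi, hk]
      decide
    · intro j hj
      rw [Nat.testBit_xor, hhigh j hj, Bool.xor_false]
  · rw [xorSum_update, ← hs]
    simp [Nat.xor_assoc, Nat.xor_comm, nxor_left_comm, Nat.xor_self, Nat.xor_zero,
      Nat.zero_xor, xor_cancel_left]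

/-- If `2^m ∣ p` and `q < p` then `2^m ≤ p ^^^ q`. -/
lemma two_pow_le_xor {m p q : ℕ} (hd : 2 ^ m ∣ p) (hq : q < p) : 2 ^ m ≤ p ^^^ q := by
  by_contra hlt
  push_neg at hlt
  have hhigh : p >>> m = q >>> m := by
    apply Nat.eq_of_testBit_eq
    intro j
    rw [Nat.testBit_shiftRight, Nat.testBit_shiftRight]
    have hfalse : (p ^^^ q).testBit (m + j) = false :=
      Nat.testBit_lt_two_pow (lt_of_lt_of_le hlt (Nat.pow_le_pow_right (by norm_num) (by omega)))
    rw [Nat.testBit_xor] at hfalse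
    cases hp : p.testBit (m + j) <;> cases hqb : q.testBit (m + j) <;> simp_all
  have hdiv : p / 2 ^ m = q / 2 ^ m := by
    simpa [Nat.shiftRight_eq_div_pow] using hhigh
  have hple : p ≤ q := by
    calc p = p / 2 ^ m * 2 ^ m := (Nat.div_mul_cancel hd).symm
      _ = q / 2 ^ m * 2 ^ m := by rw [hdiv]
      _ ≤ q := Nat.div_mul_le_self q _
  omega

/-! ### Grundy value of pure Nim -/

lemma NAux_zero {n : ℕ} (x : Fin n → ℕ) : NAux 0 x = xorSum x := by
  suffices H : ∀ N (x : Fin n → ℕ), (∑ j, x j) ≤ N → NAux 0 x = xorSum x by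
    exact H (∑ j, x j) x le_rfl
  intro N
  induction N using Nat.strong_induction_on with
  | _ N IH =>
    intro x hx
    have hIH : ∀ (i : Fin n) (v : ℕ), v < x i →
        NAux 0 (Function.update x i v) = xorSum (Function.update x i v) := by
      intro i v hv
      have hlt := sum_update_lt x i v hv
      exact IH (∑ j, Function.update x i v j) (by omega) _ le_rfl
    have hmem : xorSum x ∈ SOpt 0 x := by
      refine ⟨by omega, ?_, by omega⟩
      intro i v hv hcontra
      rw [hIH i v hv, xorSum_update] at hcontra
      have hx0 : x i ^^^ v = xorSum x ^^^ (xorSum x ^^^ x i ^^^ v) := by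
        simp [Nat.xor_assoc, Nat.xor_comm, nxor_left_comm, Nat.xor_self, Nat.xor_zero,
          Nat.zero_xor, xor_cancel_left]
      rw [hcontra, Nat.xor_self] at hx0
      exact absurd (xor_eq_zero_iff.1 hx0) hv.ne'
    have hle : NAux 0 x ≤ xorSum x := by
      rw [NAux_eq]; exact Nat.sInf_le hmem
    rcases hle.lt_or_eq with hlt | heq
    · exfalso
      obtain ⟨i, v, hv, hxor⟩ := nim_move x (NAux 0 x) hlt
      have hne := (NAux_mem_SOpt 0 x).2.1 i v hv
      rw [hIH i v hv, hxor] at hne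
      exact hne rfl
    · exact heq

/-! ### Monotonicity in the auxiliary pile -/

lemma NAux_lt_succ {n : ℕ} (a : ℕ) (x : Fin n → ℕ) : NAux a x < NAux (a + 1) x := by
  rcases lt_trichotomy (NAux (a + 1) x) (NAux a x) with hlt | heq | hgt
  · exfalso
    have hnot := not_mem_SOpt_of_lt hlt
    simp only [SOpt, Set.mem_setOf_eq, not_and_or] at hnot
    rcases hnot with h1 | h2 | h3
    · push_neg at h1
      obtain ⟨a', ha', heq⟩ := h1
      exact NAux_ne_of_lt x (by omega) heq
    · push_neg at h2
      obtain ⟨i, v, hv, heq⟩ := h2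
      exact NAux_ne_both (by omega) hv heq
    · push_neg at h3
      obtain ⟨a', ha', i, v, hv, heq⟩ := h3
      exact NAux_ne_both (a := a + 1) (by omega) hv heq
  · exact absurd heq.symm (NAux_ne_of_lt x (by omega))
  · exact hgt

lemma NAux_add_le {n : ℕ} (a d : ℕ) (x : Fin n → ℕ) : NAux a x + d ≤ NAux (a + d) x := by
  induction d with
  | zero => simp
  | succ d ih =>
    have h := NAux_lt_succ (a + d) x
    have he : NAux (a + (d + 1)) x = NAux (a + d + 1) x := rfl
    omega

lemma NAux_ge {n : ℕ} (a : ℕ) (x : Fin n → ℕ) : a + xorSum x ≤ NAux a x := by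
  have h := NAux_add_le 0 a x
  rw [NAux_zero] at h
  simpa [Nat.add_comm] using h

/-! ### Backward direction -/

lemma NAux_eq_of_cond {n : ℕ} (a : ℕ) (ha : 1 ≤ a) (x : Fin n → ℕ)
    (hs : xorSum x = 0) (hdvd : ∀ i : Fin n, 2 ^ (Nat.log 2 a + 1) ∣ x i) :
    NAux a x = a := by
  revert ha hdvd
  induction a using Nat.strong_induction_on with
  | _ a IH =>
    intro ha hdvd
    have hxor_big : ∀ (i : Fin n) (v : ℕ), v < x i →
        2 ^ (Nat.log 2 a + 1) ≤ xorSum (Function.update x i v) := by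
      intro i v hv
      rw [xorSum_update, hs, Nat.zero_xor]
      exact two_pow_le_xor (hdvd i) hv
    have ha_lt : a < 2 ^ (Nat.log 2 a + 1) := Nat.lt_pow_succ_log_self (by norm_num) a
    have hmem : a ∈ SOpt a x := by
      refine ⟨?_, ?_, ?_⟩
      · intro a' ha' hcontra
        rcases Nat.eq_zero_or_pos a' with rfl | ha'pos
        · rw [NAux_zero, hs] at hcontra; omega
        · have hdvd' : ∀ i : Fin n, 2 ^ (Nat.log 2 a' + 1) ∣ x i := fun i =>
            dvd_trans (pow_dvd_pow 2 (by
              have := Nat.log_mono_right (b := 2) ha'.le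
              omega)) (hdvd i)
          rw [IH a' ha' ha'pos hdvd'] at hcontra
          omega
      · intro i v hv hcontra
        have h1 := NAux_ge a (Function.update x i v)
        have h2 := hxor_big i v hv
        omega
      · intro a' ha' i v hv hcontra
        have h1 := NAux_ge a' (Function.update x i v)
        have h2 := hxor_big i v hv
        omega
    have hle : NAux a x ≤ a := by rw [NAux_eq]; exact Nat.sInf_le hmem
    have hge := NAux_ge a x
    omega

/-- `N(x₁, x₂, …, xₙ) = x₁` iff `x₂ ⊕ ⋯ ⊕ xₙ = 0` and
`2 ^ (⌊log₂ x₁⌋ + 1)` divides each of `x₂, …, xₙ`. -/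
theorem auxNim_eq_aux_iff {n : ℕ} (hn : 1 ≤ n) (x₁ : ℕ) (hx₁ : 1 ≤ x₁)
    (x : Fin n → ℕ) :
    NAux x₁ x = x₁ ↔
      (xorSum x = 0 ∧ ∀ i : Fin n, 2 ^ (Nat.log 2 x₁ + 1) ∣ x i) := by
  constructor
  · intro hg
    have hge := NAux_ge x₁ x
    have hs : xorSum x = 0 := by omega
    refine ⟨hs, ?_⟩
    by_contra hnd
    push_neg at hnd
    obtain ⟨j, hj⟩ := hnd
    set L := Nat.log 2 x₁ with hL
    have hr : x j % 2 ^ (L + 1) ≠ 0 := fun hc =>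
      hj (Nat.dvd_iff_mod_eq_zero.mpr hc)
    obtain ⟨k, hk, hkhigh⟩ := Nat.exists_most_significant_bit hr
    have hklt : k < L + 1 := by
      by_contra hge'
      push_neg at hge'
      have hfalse : (x j % 2 ^ (L + 1)).testBit k = false := by
        apply Nat.testBit_lt_two_pow
        calc x j % 2 ^ (L + 1) < 2 ^ (L + 1) := Nat.mod_lt _ (by positivity)
          _ ≤ 2 ^ k := Nat.pow_le_pow_right (by norm_num) hge'
      rw [hfalse] at hk
      exact Bool.false_ne_true hk
    have hbit : (x j).testBit k = true := by
      have h := Nat.testBit_mod_two_pow (x j) (L + 1) k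
      rw [hk] at h
      simpa [hklt] using h.symm
    have h2k_le : 2 ^ k ≤ x₁ := by
      calc 2 ^ k ≤ 2 ^ L := Nat.pow_le_pow_right (by norm_num) (by omega)
        _ ≤ x₁ := Nat.pow_log_le_self 2 (by omega)
    have hsq : NAux (2 ^ k) x = 2 ^ k := by
      have h1 : 2 ^ k + xorSum x ≤ NAux (2 ^ k) x := NAux_ge _ x
      have h2 : NAux (2 ^ k) x + (x₁ - 2 ^ k) ≤ NAux x₁ x := by
        have h3 := NAux_add_le (2 ^ k) (x₁ - 2 ^ k) x
        rwa [Nat.add_sub_cancel' h2k_le] at h3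
      omega
    set v := x j ^^^ 2 ^ k with hv
    have hvlt : v < x j := by
      refine Nat.lt_of_testBit k ?_ hbit ?_
      · rw [hv, Nat.testBit_xor, hbit, Nat.testBit_two_pow_self]
        decide
      · intro i hi
        rw [hv, Nat.testBit_xor]
        have hfalse : (2 ^ k).testBit i = false := by
          apply Nat.testBit_lt_two_pow
          exact Nat.pow_lt_pow_right (by norm_num) hi
        rw [hfalse, Bool.xor_false]
    have hval : NAux 0 (Function.update x j v) = 2 ^ k := by
      rw [NAux_zero, xorSum_update, hs, Nat.zero_xor, hv, ← Nat.xor_assoc,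
        Nat.xor_self, Nat.zero_xor]
    have hne := NAux_ne_both (a := 2 ^ k) (a' := 0) (x := x) (by positivity) hvlt
    rw [hval, hsq] at hne
    exact hne rfl
  · rintro ⟨hs, hdvd⟩
    exact NAux_eq_of_cond x₁ hx₁ x hs hdvd
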